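/- If X ∈ 𝒢 is a Golden codeword whose image in the quotient 𝒢/(1+i)𝒢 ≅ M₂(𝔽₂) is nonzero and non-invertible, then |det(X)|² ≥ 2/5. -/

import Mathlib

open Matrix

/-- The golden number θ = (1+√5)/2, as a complex number. -/
noncomputable def gold : ℂ := (1 + Real.sqrt 5) / 2

/-- Squared Frobenius norm of a 2×2 complex matrix. -/
noncomputable def fro2 (M : Matrix (Fin 2) (Fin 2) ℂ) : ℝ :=
  ∑ i, ∑ j, ‖M i j‖ ^ 2

/-- The element `a + bθ + i(c + dθ)` of `ℤ[i,θ]`. -/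
noncomputable def zit (a b c d : ℤ) : ℂ :=
  (a : ℂ) + b * gold + Complex.I * ((c : ℂ) + d * gold)

/-- Its conjugate under `θ ↦ 1 − θ`. -/
noncomputable def zitBar (a b c d : ℤ) : ℂ :=
  (a : ℂ) + b * (1 - gold) + Complex.I * ((c : ℂ) + d * (1 - gold))

/-- The matrix `[[w₁, w₂], [i·w̄₂, w̄₁]]` of the order `𝒪`, with
`w₁ = a + bθ + i(c+dθ)` and `w₂ = e + fθ + i(g+hθ)`. -/
noncomputable def Omat (a b c d e f g h : ℤ) : Matrix (Fin 2) (Fin 2) ℂ :=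
  !![zit a b c d, zit e f g h;
     Complex.I * zitBar e f g h, zitBar a b c d]

/-- Membership in the order `𝒪`. -/
def inO (W : Matrix (Fin 2) (Fin 2) ℂ) : Prop :=
  ∃ a b c d e f g h : ℤ, W = Omat a b c d e f g h

/-- `α = 1 + i·θ̄ = 1 + i(1−θ)`. -/
noncomputable def alphaG : ℂ := 1 + Complex.I * (1 - gold)

/-- `ᾱ = 1 + i·θ`. -/
noncomputable def alphaBarG : ℂ := 1 + Complex.I * gold

/-- `A = diag(α, ᾱ)`. -/
noncomputable def Amat : Matrix (Fin 2) (Fin 2) ℂ := !![alphaG, 0; 0, alphaBarG]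

/-- Membership in the Golden Code `𝒢 = (1/√5)·A·𝒪`. -/
def inG (X : Matrix (Fin 2) (Fin 2) ℂ) : Prop :=
  ∃ W, inO W ∧ X = ((Real.sqrt 5 : ℂ))⁻¹ • (Amat * W)

/- ### Auxiliary material : arithmetic of `ℤ[i]` and descent -/

open GaussianInt Zsqrtd in
noncomputable def phi5 : (ℤ√(-1)) →+* ZMod 5 := Zsqrtd.lift ⟨3, by decide⟩

def piG : ℤ√(-1) := ⟨2,1⟩

open GaussianInt Zsqrtd

lemma phi5_mk (a b : ℤ) : phi5 ⟨a,b⟩ = (a : ZMod 5) + (b : ZMod 5) * 3 := by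
  simp [phi5, Zsqrtd.lift]

lemma piG_dvd_of_phi5 {z : ℤ√(-1)} (h : phi5 z = 0) : piG ∣ z := by
  obtain ⟨a, b⟩ := z
  rw [phi5_mk] at h
  have h5 : (5:ℤ) ∣ a + 3 * b := by
    have : ((a + 3 * b : ℤ) : ZMod 5) = 0 := by push_cast; linear_combination h
    exact (ZMod.intCast_zmod_eq_zero_iff_dvd _ 5).mp this
  obtain ⟨m, hm⟩ := h5
  exact ⟨⟨2*m - b, b - m⟩, by ext <;> simp [piG, Zsqrtd.ext_iff] <;> omega⟩

lemma key_zmod : ∀ u v : ZMod 5, u^2 = 3 * v^2 → u = 0 ∧ v = 0 := by decide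

lemma phi5_piG : phi5 piG = 0 := by rw [piG, phi5_mk]; decide

lemma phi5_i : phi5 ⟨0,1⟩ = 3 := by rw [phi5_mk]; push_cast; ring

lemma phi5_sq {x y : ℤ√(-1)} (h : phi5 x ^ 2 = 3 * phi5 y ^ 2) :
    ∃ x' y', x = piG * x' ∧ y = piG * y' := by
  have h2 := key_zmod (phi5 x) (phi5 y) h
  obtain ⟨x', hx⟩ := piG_dvd_of_phi5 h2.1
  obtain ⟨y', hy⟩ := piG_dvd_of_phi5 h2.2
  exact ⟨x', y', hx, hy⟩

lemma piG_ne_zero : piG ≠ 0 := by decide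

lemma five_eq : (5 : ℤ√(-1)) = piG * ⟨2,-1⟩ := by decide

lemma piG_norm : piG.norm = 5 := by decide

lemma descent : ∀ n : ℕ, ∀ A B C D : ℤ√(-1),
    (A.norm + B.norm + C.norm + D.norm).natAbs = n →
    A^2 - 5*B^2 = ⟨0,1⟩ * (C^2 - 5*D^2) →
    A = 0 ∧ B = 0 ∧ C = 0 ∧ D = 0 := by
  intro n
  induction n using Nat.strong_induction_on with
  | _ n ih =>
  intro A B C D hn heq
  have hA := Zsqrtd.norm_nonneg (by norm_num) A
  have hB := Zsqrtd.norm_nonneg (by norm_num) B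
  have hC := Zsqrtd.norm_nonneg (by norm_num) C
  have hD := Zsqrtd.norm_nonneg (by norm_num) D
  rcases Nat.eq_zero_or_pos n with h0 | hpos
  · subst h0
    refine ⟨?_, ?_, ?_, ?_⟩ <;> rw [← GaussianInt.norm_eq_zero] <;> omega
  · have e1 : phi5 A ^ 2 = 3 * phi5 C ^ 2 := by
      have := congrArg phi5 heq
      simp only [map_sub, _root_.map_mul, map_pow, map_ofNat, phi5_i] at this
      have h50 : (5 : ZMod 5) = 0 := by decide
      rw [h50] at this
      linear_combination this
    obtain ⟨A', C', hA', hC'⟩ := phi5_sq e1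
    have e2 : piG * (piG * (A'^2 - ⟨0,1⟩ * C'^2)) = piG * (⟨2,-1⟩ * (B^2 - ⟨0,1⟩*D^2)) := by
      rw [hA', hC'] at heq
      linear_combination heq + (B^2 - (⟨0,1⟩:ℤ√(-1))*D^2) * five_eq
    have e2' := mul_left_cancel₀ piG_ne_zero e2
    have e3 : phi5 B ^ 2 = 3 * phi5 D ^ 2 := by
      have := congrArg phi5 e2'
      simp only [map_sub, _root_.map_mul, map_pow, phi5_i, phi5_piG, zero_mul] at this
      have hbar : phi5 ⟨2,-1⟩ = -1 := by rw [phi5_mk]; decide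
      rw [hbar] at this
      linear_combination this
    obtain ⟨B', D', hB', hD'⟩ := phi5_sq e3
    have e4 : piG^2 * (A'^2 - 5*B'^2) = piG^2 * (⟨0,1⟩ * (C'^2 - 5*D'^2)) := by
      rw [hA', hB', hC', hD'] at heq
      linear_combination heq
    have e5 := mul_left_cancel₀ (pow_ne_zero 2 piG_ne_zero) e4
    have hsum : A.norm + B.norm + C.norm + D.norm
        = 5 * (A'.norm + B'.norm + C'.norm + D'.norm) := by
      rw [hA', hB', hC', hD', Zsqrtd.norm_mul, Zsqrtd.norm_mul, Zsqrtd.norm_mul,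
        Zsqrtd.norm_mul, piG_norm]; ring
    have hA'n := Zsqrtd.norm_nonneg (by norm_num) A'
    have hB'n := Zsqrtd.norm_nonneg (by norm_num) B'
    have hC'n := Zsqrtd.norm_nonneg (by norm_num) C'
    have hD'n := Zsqrtd.norm_nonneg (by norm_num) D'
    have hlt : (A'.norm + B'.norm + C'.norm + D'.norm).natAbs < n := by omega
    obtain ⟨z1, z2, z3, z4⟩ := ih _ hlt A' B' C' D' rfl e5
    refine ⟨?_, ?_, ?_, ?_⟩ <;> simp_all

/- ### Complex-side computations -/

lemma sqrt5_sq : (Real.sqrt 5 : ℂ)^2 = 5 := by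
  rw [← Complex.ofReal_pow]; norm_num [Real.sq_sqrt]

lemma sqrt5_ne : (Real.sqrt 5 : ℂ) ≠ 0 := by
  intro h
  have := sqrt5_sq
  rw [h] at this
  norm_num at this

lemma goldSq : gold ^ 2 = gold + 1 := by
  unfold gold; linear_combination sqrt5_sq / 4

lemma quadG (s t : ℂ) : (s + t*gold) * (s + t*(1-gold)) = s^2 + s*t - t^2 := by
  linear_combination (-(t^2)) * goldSq

lemma zit_eq (a b c d : ℤ) :
    zit a b c d = ((⟨a,c⟩ : GaussianInt) : ℂ) + ((⟨b,d⟩ : GaussianInt) : ℂ) * gold := by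
  rw [toComplex_def', toComplex_def', zit]; ring

lemma zitBar_eq (a b c d : ℤ) :
    zitBar a b c d = ((⟨a,c⟩ : GaussianInt) : ℂ) + ((⟨b,d⟩ : GaussianInt) : ℂ) * (1-gold) := by
  rw [toComplex_def', toComplex_def', zitBar]; ring

lemma iG : ((⟨0,1⟩ : GaussianInt) : ℂ) = Complex.I := by rw [toComplex_def']; ring

lemma detO (a b c d e f g h : ℤ) :
    (Omat a b c d e f g h).det =
      (((⟨a,c⟩^2 + ⟨a,c⟩*⟨b,d⟩ - ⟨b,d⟩^2
        - ⟨0,1⟩ * (⟨e,g⟩^2 + ⟨e,g⟩*⟨f,h⟩ - ⟨f,h⟩^2) : GaussianInt)) : ℂ) := by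
  rw [Omat, Matrix.det_fin_two_of]
  simp only [map_sub, map_add, _root_.map_mul, map_pow]
  rw [zit_eq, zit_eq, zitBar_eq, zitBar_eq, iG]
  linear_combination quadG ((⟨a,c⟩:GaussianInt):ℂ) ((⟨b,d⟩:GaussianInt):ℂ)
    - Complex.I * quadG ((⟨e,g⟩:GaussianInt):ℂ) ((⟨f,h⟩:GaussianInt):ℂ)

lemma detA : Amat.det = 2 + Complex.I := by
  rw [Amat, Matrix.det_fin_two_of, alphaG, alphaBarG]
  linear_combination goldSq + (-(gold^2 - gold)) * Complex.I_sq

lemma zit_zero : zit 0 0 0 0 = 0 := by simp [zit]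

lemma zitBar_zero : zitBar 0 0 0 0 = 0 := by simp [zitBar]

/-- If a Golden codeword `X ∈ 𝒢` has nonzero, non-invertible image in the quotient
`𝒢/(1+i)𝒢 ≅ M₂(𝔽₂)` — i.e. `X ∉ (1+i)𝒢` and `det(√5·X) ∈ (1+i)ℤ[i]` — then
`|det X|² ≥ 2/5`. -/
theorem det_noninvertible_class (X : Matrix (Fin 2) (Fin 2) ℂ)
    (hX : inG X) (h0 : X ≠ 0)
    (hnonzero : ¬ ∃ Y, inG Y ∧ X = (1 + Complex.I) • Y)
    (hnoninv : ∃ p q : ℤ,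
      ((Real.sqrt 5 : ℂ) • X).det = (1 + Complex.I) * ((p : ℂ) + (q : ℂ) * Complex.I)) :
    2 / 5 ≤ ‖X.det‖ ^ 2 := by
  obtain ⟨W, ⟨a, b, c, d, e, f, g, h, hW⟩, hXW⟩ := hX
  obtain ⟨p, q, hpq⟩ := hnoninv
  set s1 : GaussianInt := ⟨a,c⟩ with hs1
  set t1 : GaussianInt := ⟨b,d⟩ with ht1
  set s2 : GaussianInt := ⟨e,g⟩ with hs2
  set t2 : GaussianInt := ⟨f,h⟩ with ht2
  set G : GaussianInt := s1^2 + s1*t1 - t1^2 - ⟨0,1⟩ * (s2^2 + s2*t2 - t2^2) with hG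
  -- determinant of X
  have hdetX : X.det = ((Real.sqrt 5 : ℂ))⁻¹^2 * ((2 + Complex.I) * (G : ℂ)) := by
    rw [hXW, hW, Matrix.det_smul, Matrix.det_mul, detA, detO]
    simp [hG, hs1, ht1, hs2, ht2]
  -- determinant of √5 • X
  have hdet5 : ((Real.sqrt 5 : ℂ) • X).det = (2 + Complex.I) * (G : ℂ) := by
    rw [Matrix.det_smul, hdetX]
    field_simp
    rw [Fintype.card_fin]
  rw [hdet5] at hpq
  -- move to Gaussian integers
  have c2 : ((⟨2,1⟩ : GaussianInt) : ℂ) = 2 + Complex.I := by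
    rw [toComplex_def']; push_cast; ring
  have c11 : ((⟨1,1⟩ : GaussianInt) : ℂ) = 1 + Complex.I := by
    rw [toComplex_def']; push_cast; ring
  have cpq : ((⟨p,q⟩ : GaussianInt) : ℂ) = (p : ℂ) + (q : ℂ) * Complex.I := by
    rw [toComplex_def']
  have hGauss : (⟨2,1⟩ : GaussianInt) * G = ⟨1,1⟩ * ⟨p,q⟩ := by
    apply toComplex_inj.mp
    rw [_root_.map_mul, _root_.map_mul, c2, c11, cpq, hpq]
  -- G ≠ 0 (division algebra property, by descent)
  have hGne : G ≠ 0 := by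
    intro hG0
    have hF : s1^2 + s1*t1 - t1^2 = (⟨0,1⟩ : GaussianInt) * (s2^2 + s2*t2 - t2^2) := by
      have h' : G = 0 := hG0
      rw [hG] at h'
      linear_combination h'
    have heq : (2*s1 + t1)^2 - 5*t1^2 = (⟨0,1⟩:GaussianInt) * ((2*s2 + t2)^2 - 5*t2^2) := by
      linear_combination 4 * hF
    obtain ⟨z1, z2, z3, z4⟩ := descent _ (2*s1+t1) t1 (2*s2+t2) t2 rfl heq
    have ha : a = 0 ∧ c = 0 := by
      have hs10 : s1 = 0 := by
        have h2s : (2:GaussianInt) * s1 = 0 := by linear_combination z1 - z2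
        rcases mul_eq_zero.mp h2s with h2 | h'
        · exact absurd h2 (by decide)
        · exact h'
      rw [hs1] at hs10
      simpa [Zsqrtd.ext_iff] using hs10
    have hb : b = 0 ∧ d = 0 := by rw [ht1] at z2; simpa [Zsqrtd.ext_iff] using z2
    have he : e = 0 ∧ g = 0 := by
      have hs20 : s2 = 0 := by
        have h2s : (2:GaussianInt) * s2 = 0 := by linear_combination z3 - z4
        rcases mul_eq_zero.mp h2s with h2 | h'
        · exact absurd h2 (by decide)
        · exact h'
      rw [hs2] at hs20
      simpa [Zsqrtd.ext_iff] using hs20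
    have hf : f = 0 ∧ h = 0 := by rw [ht2] at z4; simpa [Zsqrtd.ext_iff] using z4
    apply h0
    rw [hXW, hW, ha.1, ha.2, hb.1, hb.2, he.1, he.2, hf.1, hf.2]
    have hO0 : Omat 0 0 0 0 0 0 0 0 = 0 := by
      ext i j
      fin_cases i <;> fin_cases j <;> simp [Omat, zit_zero, zitBar_zero]
    rw [hO0, Matrix.mul_zero, smul_zero]
  -- extract the factor (1+i) from G
  set x := G.re with hx
  set y := G.im with hy
  have hcomp : 2*x - y = p - q ∧ x + 2*y = p + q := by
    have h1 := congrArg Zsqrtd.re hGauss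
    have h2 := congrArg Zsqrtd.im hGauss
    simp [Zsqrtd.re_mul, Zsqrtd.im_mul] at h1 h2
    constructor <;> omega
  obtain ⟨u, v, hu, hv⟩ : ∃ u v : ℤ, x = u - v ∧ y = u + v :=
    ⟨(x+y)/2, (y-x)/2, by omega, by omega⟩
  set M : GaussianInt := ⟨u, v⟩ with hM
  have hGM : G = ⟨1,1⟩ * M := by
    ext <;> simp [hM, Zsqrtd.re_mul, Zsqrtd.im_mul, ← hx, ← hy] <;> omega
  have hMne : M ≠ 0 := by
    intro hM0
    apply hGne
    rw [hGM, hM0, mul_zero]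
  have hMnorm : 1 ≤ M.norm := GaussianInt.norm_pos.mpr hMne
  -- final computation
  have hinv : Complex.normSq ((Real.sqrt 5 : ℂ))⁻¹ = 1/5 := by
    rw [Complex.normSq_inv, Complex.normSq_ofReal,
      show Real.sqrt 5 * Real.sqrt 5 = 5 from Real.mul_self_sqrt (by norm_num)]
    norm_num
  have e2 : Complex.normSq (2 + Complex.I) = 5 := by
    simp [Complex.normSq_apply]; norm_num
  have e3 : Complex.normSq ((⟨1,1⟩ : GaussianInt) : ℂ) = 2 := by
    rw [c11]; simp [Complex.normSq_apply]; norm_num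
  have e4 : Complex.normSq ((M : GaussianInt) : ℂ) = (M.norm : ℝ) :=
    (GaussianInt.intCast_real_norm M).symm
  have habs : Complex.normSq X.det = 2/5 * (M.norm : ℝ) := by
    rw [hdetX, hGM, _root_.map_mul GaussianInt.toComplex]
    rw [Complex.normSq_mul, Complex.normSq_mul, Complex.normSq_mul, map_pow,
      hinv, e2, e3, e4]
    ring
  rw [Complex.sq_norm, habs]
  have hM1 : (1:ℝ) ≤ (M.norm : ℝ) := by exact_mod_cast hMnorm
  linarith
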